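/- Let 1 < p ≤ q, 0 < t₁ ≤ t₂, and let φ, ψ_B, and φ_B(t) := ∫₀ᵗ ψ_B(s) ds be as in the regularization construction (ψ_B equals φ' on [t₁,t₂] and has pure (p−1)-power tails). Then for every t ∈ [t₁, t₂]: 0 ≤ φ_B(t) − φ(t) ≤ (q/p − 1)·φ(t₁). -/

import Mathlib

open MeasureTheory intervalIntegral Set

lemma aux_rpow_int (a r : ℝ) (ha : 0 < a) (hr : 0 < r) :
    ∫ s in (0:ℝ)..a, (s / a) ^ r = a / (r + 1) := by
  have hcongr : EqOn (fun s : ℝ => (s / a) ^ r) (fun s : ℝ => s ^ r * a ^ (-r))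
      (Set.uIcc 0 a) := by
    intro s hs
    rw [Set.uIcc_of_le ha.le] at hs
    have hs0 : 0 ≤ s := hs.1
    simp only
    rw [Real.div_rpow hs0 ha.le, Real.rpow_neg ha.le, div_eq_mul_inv]
  rw [intervalIntegral.integral_congr hcongr, intervalIntegral.integral_mul_const,
    integral_rpow (Or.inl (by linarith))]
  rw [Real.zero_rpow (by linarith), sub_zero]
  rw [div_mul_eq_mul_div, ← Real.rpow_add ha, show r + 1 + -r = 1 by ring, Real.rpow_one]

theorem stmt_12 (p q t₁ t₂ : ℝ) (hp : 1 < p) (hpq : p ≤ q) (ht₁ : 0 < t₁) (ht : t₁ ≤ t₂)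
    (φ φ' : ℝ → ℝ) (hφ0 : φ 0 = 0)
    (hcont : ContinuousOn φ' (Set.Ici (0:ℝ)))
    (hnn : ∀ t, 0 ≤ t → 0 ≤ φ' t)
    (hrepr : ∀ t, 0 ≤ t → φ t = ∫ s in (0:ℝ)..t, φ' s)
    (hint : ∀ t : ℝ, IntervalIntegrable φ' MeasureTheory.volume 0 t)
    (hInc : MonotoneOn (fun t => φ' t / t ^ (p - 1)) (Set.Ioi (0:ℝ)))
    (hDec : AntitoneOn (fun t => φ' t / t ^ (q - 1)) (Set.Ioi (0:ℝ))) :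
    ∀ t ∈ Set.Icc t₁ t₂,
      0 ≤ (∫ s in (0:ℝ)..t,
            (if s < t₁ then φ' t₁ * (s / t₁) ^ (p - 1)
             else if s ≤ t₂ then φ' s
             else φ' t₂ * (s / t₂) ^ (p - 1))) - φ t ∧
      (∫ s in (0:ℝ)..t,
            (if s < t₁ then φ' t₁ * (s / t₁) ^ (p - 1)
             else if s ≤ t₂ then φ' s
             else φ' t₂ * (s / t₂) ^ (p - 1))) - φ t ≤ (q / p - 1) * φ t₁ := by
  intro t htmem
  obtain ⟨ht1t, htt2⟩ := htmem
  have hq : 1 < q := lt_of_lt_of_le hp hpq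
  have hp0 : (0:ℝ) < p := by linarith
  have hq0 : (0:ℝ) < q := by linarith
  set c := φ' t₁ with hc
  set f : ℝ → ℝ := fun s =>
    if s < t₁ then φ' t₁ * (s / t₁) ^ (p - 1)
    else if s ≤ t₂ then φ' s
    else φ' t₂ * (s / t₂) ^ (p - 1) with hf
  -- continuous comparison functions
  have hg1cont : Continuous (fun s : ℝ => c * (s / t₁) ^ (p - 1)) := by
    exact continuous_const.mul (((continuous_id.div_const t₁).rpow_const
      (fun x => Or.inr (by linarith))))
  have hgqcont : Continuous (fun s : ℝ => c * (s / t₁) ^ (q - 1)) := by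
    exact continuous_const.mul (((continuous_id.div_const t₁).rpow_const
      (fun x => Or.inr (by linarith))))
  -- f equals c*(s/t₁)^(p-1) on [0,t₁]
  have heq1 : EqOn f (fun s : ℝ => c * (s / t₁) ^ (p - 1)) (Set.uIcc 0 t₁) := by
    intro s hs
    rw [Set.uIcc_of_le ht₁.le] at hs
    rcases lt_or_eq_of_le hs.2 with h | h
    · simp [hf, h, hc]
    · subst h
      simp [hf, hc, le_trans (le_refl s) ht, Real.one_rpow, div_self (ne_of_gt ht₁)]
  -- f equals φ' on [t₁,t]
  have heq2 : EqOn f φ' (Set.uIcc t₁ t) := by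
    intro s hs
    rw [Set.uIcc_of_le ht1t] at hs
    have h1 : ¬ s < t₁ := not_lt.mpr hs.1
    have h2 : s ≤ t₂ := le_trans hs.2 htt2
    simp [hf, h1, h2]
  have hfi1 : IntervalIntegrable f volume 0 t₁ :=
    (hg1cont.intervalIntegrable 0 t₁).congr
      (fun s hs => (heq1 (uIoc_subset_uIcc hs)).symm)
  have hfi2 : IntervalIntegrable f volume t₁ t :=
    ((hint t).mono_set (by
      rw [Set.uIcc_of_le ht1t, Set.uIcc_of_le (le_trans ht₁.le ht1t)]
      exact Set.Icc_subset_Icc ht₁.le le_rfl)).congr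
      (fun s hs => (heq2 (uIoc_subset_uIcc hs)).symm)
  -- compute the integral
  have hsplit : (∫ s in (0:ℝ)..t, f s)
      = (∫ s in (0:ℝ)..t₁, f s) + ∫ s in t₁..t, f s :=
    (intervalIntegral.integral_add_adjacent_intervals hfi1 hfi2).symm
  have hI1 : (∫ s in (0:ℝ)..t₁, f s) = c * t₁ / p := by
    rw [intervalIntegral.integral_congr heq1, intervalIntegral.integral_const_mul,
      aux_rpow_int t₁ (p-1) ht₁ (by linarith)]
    ring_nf
  have hI2 : (∫ s in t₁..t, f s) = φ t - φ t₁ := by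
    rw [intervalIntegral.integral_congr heq2, hrepr t (le_trans ht₁.le ht1t),
      hrepr t₁ ht₁.le]
    rw [← intervalIntegral.integral_add_adjacent_intervals (hint t₁)
      ((hint t).mono_set (by
        rw [Set.uIcc_of_le ht1t, Set.uIcc_of_le (le_trans ht₁.le ht1t)]
        exact Set.Icc_subset_Icc ht₁.le le_rfl))]
    ring
  -- pointwise bounds on (0, t₁]
  have hub : ∀ s ∈ Set.Ioc (0:ℝ) t₁, φ' s ≤ c * (s / t₁) ^ (p - 1) := by
    intro s hs
    have h := hInc hs.1 (Set.mem_Ioi.mpr ht₁) hs.2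
    have hsp : (0:ℝ) < s ^ (p - 1) := Real.rpow_pos_of_pos hs.1 _
    have ht1p : (0:ℝ) < t₁ ^ (p - 1) := Real.rpow_pos_of_pos ht₁ _
    rw [div_le_div_iff₀ hsp ht1p] at h
    rw [Real.div_rpow hs.1.le ht₁.le, ← mul_div_assoc, le_div_iff₀ ht1p]
    linarith [h]
  have hlb : ∀ s ∈ Set.Ioc (0:ℝ) t₁, c * (s / t₁) ^ (q - 1) ≤ φ' s := by
    intro s hs
    have h := hDec hs.1 (Set.mem_Ioi.mpr ht₁) hs.2
    have hsq : (0:ℝ) < s ^ (q - 1) := Real.rpow_pos_of_pos hs.1 _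
    have ht1q : (0:ℝ) < t₁ ^ (q - 1) := Real.rpow_pos_of_pos ht₁ _
    rw [div_le_div_iff₀ ht1q hsq] at h
    rw [Real.div_rpow hs.1.le ht₁.le, ← mul_div_assoc, div_le_iff₀ ht1q]
    linarith [h]
  -- integral bounds for φ t₁
  have haeub : φ' ≤ᵐ[volume.restrict (Set.Icc (0:ℝ) t₁)]
      (fun s => c * (s / t₁) ^ (p - 1)) := by
    have h0 : ∀ᵐ s ∂(volume.restrict (Set.Icc (0:ℝ) t₁)), s ∈ Set.Ioc (0:ℝ) t₁ := by
      rw [ae_restrict_iff' measurableSet_Icc]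
      have : (volume : Measure ℝ) {(0:ℝ)} = 0 := measure_singleton 0
      filter_upwards [measure_eq_zero_iff_ae_notMem.mp this] with s hs hmem
      exact ⟨lt_of_le_of_ne hmem.1 (fun h => hs h.symm), hmem.2⟩
    filter_upwards [h0] with s hs using hub s hs
  have haelb : (fun s => c * (s / t₁) ^ (q - 1)) ≤ᵐ[volume.restrict (Set.Icc (0:ℝ) t₁)]
      φ' := by
    have h0 : ∀ᵐ s ∂(volume.restrict (Set.Icc (0:ℝ) t₁)), s ∈ Set.Ioc (0:ℝ) t₁ := by
      rw [ae_restrict_iff' measurableSet_Icc]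
      have : (volume : Measure ℝ) {(0:ℝ)} = 0 := measure_singleton 0
      filter_upwards [measure_eq_zero_iff_ae_notMem.mp this] with s hs hmem
      exact ⟨lt_of_le_of_ne hmem.1 (fun h => hs h.symm), hmem.2⟩
    filter_upwards [h0] with s hs using hlb s hs
  have hφub : φ t₁ ≤ c * t₁ / p := by
    have := intervalIntegral.integral_mono_ae_restrict ht₁.le (hint t₁)
      (hg1cont.intervalIntegrable 0 t₁) haeub
    rw [intervalIntegral.integral_const_mul, aux_rpow_int t₁ (p-1) ht₁ (by linarith)] at this
    rw [hrepr t₁ ht₁.le]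
    calc (∫ s in (0:ℝ)..t₁, φ' s) ≤ c * (t₁ / (p - 1 + 1)) := this
    _ = c * t₁ / p := by ring_nf
  have hφlb : c * t₁ / q ≤ φ t₁ := by
    have := intervalIntegral.integral_mono_ae_restrict ht₁.le
      (hgqcont.intervalIntegrable 0 t₁) (hint t₁) haelb
    rw [intervalIntegral.integral_const_mul, aux_rpow_int t₁ (q-1) ht₁ (by linarith)] at this
    rw [hrepr t₁ ht₁.le]
    calc c * t₁ / q = c * (t₁ / (q - 1 + 1)) := by ring_nf
    _ ≤ ∫ s in (0:ℝ)..t₁, φ' s := this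
  have hval : (∫ s in (0:ℝ)..t, f s) - φ t = c * t₁ / p - φ t₁ := by
    rw [hsplit, hI1, hI2]; ring
  constructor
  · show 0 ≤ (∫ s in (0:ℝ)..t, f s) - φ t
    rw [hval]; linarith
  · show (∫ s in (0:ℝ)..t, f s) - φ t ≤ (q / p - 1) * φ t₁
    rw [hval]
    have h1 : c * t₁ ≤ q * φ t₁ := by
      rw [div_le_iff₀ hq0] at hφlb; linarith
    have h2 : c * t₁ / p ≤ q * φ t₁ / p := by gcongr
    have h3 : (q / p - 1) * φ t₁ = q * φ t₁ / p - φ t₁ := by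
      rw [sub_mul, one_mul, div_mul_eq_mul_div]
    linarith
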